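/- Let p be a prime, K = ZMod p, and let α, β ∈ K be nonzero. Let C be a 2×2 matrix over K with determinant 1 whose (1,1) entry a is nonzero. Then for any natural numbers n₁, m₁, n₂, m₂ there exist natural numbers m̃₁, ñ₁, m̃₂, ñ₂ such that A₁^{n₁} · C · A₀^{m₁ + m̃₁} · A₁^{ñ₁} = A₁^{n₂} · C · A₀^{m₂ + m̃₂} · A₁^{ñ₂} = [[a, 0],[0, a⁻¹]]; in other words, the two extended products are equal and diagonal, yielding a collision of the generalized Zémor hash function. -/

import Mathlib

lemma zemor_pow0 {K : Type*} [CommRing K] (α : K) (k : ℕ) :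
    (!![1, α; 0, 1] : Matrix (Fin 2) (Fin 2) K) ^ k = !![1, (k : K) * α; 0, 1] := by
  induction k with
  | zero => simp [Matrix.one_fin_two]
  | succ k ih =>
    rw [pow_succ, ih, Matrix.mul_fin_two]
    push_cast
    congr 1 <;> ring

lemma zemor_pow1 {K : Type*} [CommRing K] (β : K) (k : ℕ) :
    (!![1, 0; β, 1] : Matrix (Fin 2) (Fin 2) K) ^ k = !![1, 0; (k : K) * β, 1] := by
  induction k with
  | zero => simp [Matrix.one_fin_two]
  | succ k ih =>
    rw [pow_succ, ih, Matrix.mul_fin_two]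
    push_cast
    congr 1 <;> ring

lemma zemor_key (p : ℕ) [Fact p.Prime] (α β : ZMod p)
    (hα : α ≠ 0) (hβ : β ≠ 0)
    (C : Matrix (Fin 2) (Fin 2) (ZMod p)) (hdet : C.det = 1) (ha : C 0 0 ≠ 0)
    (n m : ℕ) :
    ∃ mt nt : ℕ,
      (!![1, 0; β, 1] : Matrix (Fin 2) (Fin 2) (ZMod p)) ^ n * C *
          (!![1, α; 0, 1] : Matrix (Fin 2) (Fin 2) (ZMod p)) ^ (m + mt) *
          (!![1, 0; β, 1] : Matrix (Fin 2) (Fin 2) (ZMod p)) ^ nt =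
        !![C 0 0, 0; 0, (C 0 0)⁻¹] := by
  set a := C 0 0
  set b := C 0 1
  set c := C 1 0
  set d := C 1 1
  refine ⟨(-b / a * α⁻¹ - (m : ZMod p)).val, (-a * ((n : ZMod p) * β * a + c) * β⁻¹).val, ?_⟩
  rw [zemor_pow0, zemor_pow1, zemor_pow1]
  have hval : ∀ x : ZMod p, ((x.val : ℕ) : ZMod p) = x := fun x => ZMod.natCast_rightInverse x
  push_cast
  rw [hval, hval]
  have hC : C = !![a, b; c, d] := by
    rw [Matrix.eta_fin_two C]
  rw [hC, Matrix.mul_fin_two, Matrix.mul_fin_two, Matrix.mul_fin_two]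
  rw [hC, Matrix.det_fin_two_of] at hdet
  clear hC
  clear_value a b c d
  ext i j
  fin_cases i <;> fin_cases j <;>
    simp only [Matrix.cons_val', Matrix.cons_val_zero, Matrix.cons_val_one, Matrix.head_cons,
      Matrix.head_fin_const, Matrix.empty_val', Matrix.cons_val_fin_one, Matrix.of_apply, Fin.zero_eta, Fin.mk_one] <;>
    field_simp
  · ring
  · ring
  · linear_combination (-(↑n * β * a + c)) * hdet
  · linear_combination hdet


/-- Generating collisions of the generalized Zémor hash function by
extending a message on both sides to a fixed diagonal matrix.
`A₀ = !![1, α; 0, 1]`, `A₁ = !![1, 0; β, 1]` are the generalized Zémor generators. -/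
theorem zemor_collision (p : ℕ) [Fact p.Prime] (α β : ZMod p)
    (hα : α ≠ 0) (hβ : β ≠ 0)
    (C : Matrix (Fin 2) (Fin 2) (ZMod p)) (hdet : C.det = 1) (ha : C 0 0 ≠ 0)
    (n₁ m₁ n₂ m₂ : ℕ) :
    ∃ mt₁ nt₁ mt₂ nt₂ : ℕ,
      (!![1, 0; β, 1] : Matrix (Fin 2) (Fin 2) (ZMod p)) ^ n₁ * C *
          (!![1, α; 0, 1] : Matrix (Fin 2) (Fin 2) (ZMod p)) ^ (m₁ + mt₁) *
          (!![1, 0; β, 1] : Matrix (Fin 2) (Fin 2) (ZMod p)) ^ nt₁ =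
        !![C 0 0, 0; 0, (C 0 0)⁻¹] ∧
      (!![1, 0; β, 1] : Matrix (Fin 2) (Fin 2) (ZMod p)) ^ n₂ * C *
          (!![1, α; 0, 1] : Matrix (Fin 2) (Fin 2) (ZMod p)) ^ (m₂ + mt₂) *
          (!![1, 0; β, 1] : Matrix (Fin 2) (Fin 2) (ZMod p)) ^ nt₂ =
        !![C 0 0, 0; 0, (C 0 0)⁻¹] := by
  obtain ⟨mt₁, nt₁, h₁⟩ := zemor_key p α β hα hβ C hdet ha n₁ m₁
  obtain ⟨mt₂, nt₂, h₂⟩ := zemor_key p α β hα hβ C hdet ha n₂ m₂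
  exact ⟨mt₁, nt₁, mt₂, nt₂, h₁, h₂⟩
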